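/- arXiv:math/0406134 — 2 statements merged into one kernel-verified Lean document; each statement's English description precedes it below -/
import Mathlib

section
/- Fix 1 ≤ k < n and suppose a real 2-uniform (n,k)-frame exists. Let p be a real number with p > 2 + √(5k(n−1)/(n−k)). Then every uniform real (n,k)-frame F satisfies e_2^p(F) ≥ k/n + c_{n,k}, with equality if and only if F is 2-uniform. If no real 2-uniform (n,k)-frame exists, then every uniform real (n,k)-frame F satisfies e_2^p(F) > k/n + c_{n,k}. -/
open Matrix
open scoped Classical

noncomputable section

namespace FramesErasures

/-- The constant `c_{n,k} = sqrt(k(n-k)/(n^2(n-1)))`. -/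
noncomputable def c (n k : ℕ) : ℝ :=
  Real.sqrt ((k : ℝ) * ((n : ℝ) - k) / ((n : ℝ) ^ 2 * ((n : ℝ) - 1)))

/-- Operator norm (ℓ²→ℓ²) of a square real matrix. -/
noncomputable def opNorm {k : ℕ} (A : Matrix (Fin k) (Fin k) ℝ) : ℝ :=
  ‖Matrix.toEuclideanCLM (𝕜 := ℝ) A‖

/-- The diagonal 0-1 matrix with 1's exactly at the positions in `S`. -/
def diagS {n : ℕ} (S : Finset (Fin n)) : Matrix (Fin n) (Fin n) ℝ :=
  Matrix.diagonal fun i => if i ∈ S then 1 else 0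

/-- `e_m^∞(F)`: the maximal norm of an error operator for `m` erasures. -/
noncomputable def errInf {n k : ℕ} (V : Matrix (Fin n) (Fin k) ℝ) (m : ℕ) : ℝ :=
  sSup {x : ℝ | ∃ S : Finset (Fin n), S.card = m ∧ x = opNorm (Vᵀ * diagS S * V)}

/-- `e_m^p(F)`: the ℓᵖ-average of the norms of the error operators for `m` erasures. -/
noncomputable def errP {n k : ℕ} (V : Matrix (Fin n) (Fin k) ℝ) (m : ℕ) (p : ℝ) : ℝ :=
  ((n.choose m : ℝ)⁻¹ *
      ∑ S ∈ Finset.univ.filter fun S : Finset (Fin n) => S.card = m,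
        opNorm (Vᵀ * diagS S * V) ^ p) ^ (1 / p)

/-- A Parseval frame is uniform if all diagonal Grammian entries equal `k/n`. -/
def Uniform (n k : ℕ) (V : Matrix (Fin n) (Fin k) ℝ) : Prop :=
  ∀ j, (V * Vᵀ) j j = (k : ℝ) / n

/-- 2-uniformity, via the equiangularity characterization. -/
def TwoUniform (n k : ℕ) (V : Matrix (Fin n) (Fin k) ℝ) : Prop :=
  Uniform n k V ∧ ∀ i j, i ≠ j → |(V * Vᵀ) i j| = c n k

/-- The `n×n` all-ones matrix. -/
def Jmat (n : ℕ) : Matrix (Fin n) (Fin n) ℝ :=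
  Matrix.of fun _ _ => 1

/-- A real 2-uniform `(n,k)`-frame, given by its analysis operator and signature matrix. -/
structure TwoUniformFrame (n k : ℕ) where
  V : Matrix (Fin n) (Fin k) ℝ
  Q : Matrix (Fin n) (Fin n) ℝ
  parseval : Vᵀ * V = 1
  symm : Qᵀ = Q
  diag : ∀ i, Q i i = 0
  offdiag : ∀ i j, i ≠ j → Q i j = 1 ∨ Q i j = -1
  gram : V * Vᵀ = ((k : ℝ) / n) • (1 : Matrix (Fin n) (Fin n) ℝ) + c n k • Q

/-- The graph associated with a 2-uniform frame: `i ≠ j` adjacent iff `Q i j = -1`. -/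
def frameGraph {n k : ℕ} (F : TwoUniformFrame n k) : SimpleGraph (Fin n) where
  Adj i j := i ≠ j ∧ F.Q i j = -1
  symm := ⟨by
    intro i j h
    refine ⟨h.1.symm, ?_⟩
    have h2 : F.Q i j = F.Q j i := by
      have := congrFun (congrFun F.symm j) i
      simpa [Matrix.transpose_apply] using this
    rw [← h2]
    exact h.2⟩
  loopless := ⟨fun i h => h.1 rfl⟩

/-- A graph is complete bipartite (with one part possibly empty). -/
def IsCompleteBipartite {α : Type*} (G : SimpleGraph α) : Prop :=
  ∃ A : Set α, ∀ i j, G.Adj i j ↔ ((i ∈ A) ↔ (j ∉ A))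

/-- `G` has an induced complete bipartite subgraph on `m` vertices. -/
def HasInducedCompleteBipartite {n : ℕ} (G : SimpleGraph (Fin n)) (m : ℕ) : Prop :=
  ∃ S : Finset (Fin n), S.card = m ∧
    IsCompleteBipartite (G.induce (S : Set (Fin n)))

/-- The Seidel adjacency matrix of a graph. -/
noncomputable def seidel {α : Type*} [DecidableEq α] (G : SimpleGraph α) : Matrix α α ℝ :=
  Matrix.of fun i j => if i = j then 0 else if G.Adj i j then -1 else 1

/-- Switching equivalence of graphs: Seidel matrices conjugate by a product of a permutation
and a `±1` diagonal matrix. -/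
def SwitchingEquivalent {α : Type*} [DecidableEq α] (G H : SimpleGraph α) : Prop :=
  ∃ (σ : Equiv.Perm α) (ε : α → ℝ), (∀ i, ε i = 1 ∨ ε i = -1) ∧
    ∀ i j, seidel H i j = ε i * ε j * seidel G (σ i) (σ j)

/-- `G ∈ 𝒢_m^(s)`: the minimal number of edges in the switching class of `G` equals `s`. -/
def MinSwitchEdges {α : Type*} [DecidableEq α] (G : SimpleGraph α) (s : ℕ) : Prop :=
  IsLeast {t : ℕ | ∃ H : SimpleGraph α, SwitchingEquivalent G H ∧ H.edgeSet.ncard = t} s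

/-- `lam` is the largest eigenvalue of the real matrix `A`. -/
def IsMaxEigenvalue {m : ℕ} (A : Matrix (Fin m) (Fin m) ℝ) (lam : ℝ) : Prop :=
  (∃ v : Fin m → ℝ, v ≠ 0 ∧ A.mulVec v = lam • v) ∧
  ∀ μ : ℝ, (∃ v : Fin m → ℝ, v ≠ 0 ∧ A.mulVec v = μ • v) → μ ≤ lam

/-- A 2-uniform frame is 3-uniform if the error norm is the same for all triple erasures. -/
def ThreeUniform {n k : ℕ} (F : TwoUniformFrame n k) : Prop :=
  ∀ S T : Finset (Fin n), S.card = 3 → T.card = 3 →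
    opNorm (F.Vᵀ * diagS S * F.V) = opNorm (F.Vᵀ * diagS T * F.V)

open Set in
lemma key_aux {b c p : ℝ} (hb : 0 < b) (hc : 0 < c) (hp2 : 2 < p)
    (hpc : 2 * b / c < p - 2) :
    ∀ t : ℝ, 0 ≤ t → t ≠ c →
      (b + c) ^ p + (p * (b + c) ^ (p - 1) / (2 * c)) * (t ^ 2 - c ^ 2)
        < (b + t) ^ p := by
  set lam : ℝ := p * (b + c) ^ (p - 1) / (2 * c) with hlam_def
  set φ : ℝ → ℝ := fun t => (b + t) ^ p - lam * t ^ 2 with hφ_def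
  have hbc : (0:ℝ) < b + c := by linarith
  have hp0 : 0 < p := by linarith
  have hlam : 0 < lam := by
    apply div_pos (mul_pos hp0 (Real.rpow_pos_of_pos hbc _)) (by linarith)
  set φ' : ℝ → ℝ := fun t => p * (b + t) ^ (p - 1) - 2 * lam * t with hφ'_def
  set φ'' : ℝ → ℝ := fun t => p * (p - 1) * (b + t) ^ (p - 2) - 2 * lam with hφ''_def
  have F1 : ∀ t : ℝ, 0 ≤ t → HasDerivAt φ (φ' t) t := by
    intro t ht
    have hbt : (0:ℝ) < b + t := by linarith
    have h1 : HasDerivAt (fun t : ℝ => b + t) 1 t := by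
      simpa using (hasDerivAt_id t).const_add b
    have h2 := h1.rpow_const (p := p) (Or.inl hbt.ne')
    have h3 : HasDerivAt (fun t : ℝ => lam * t ^ 2) (2 * lam * t) t := by
      have := ((hasDerivAt_pow 2 t).const_mul lam)
      simpa [mul_comm, mul_assoc, mul_left_comm] using this
    have h4 := h2.sub h3
    simp only [one_mul] at h4
    exact h4
  have F2 : ∀ t : ℝ, 0 ≤ t → HasDerivAt φ' (φ'' t) t := by
    intro t ht
    have hbt : (0:ℝ) < b + t := by linarith
    have h1 : HasDerivAt (fun t : ℝ => b + t) 1 t := by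
      simpa using (hasDerivAt_id t).const_add b
    have h2 := (h1.rpow_const (p := p - 1) (Or.inl hbt.ne')).const_mul p
    have h3 : HasDerivAt (fun t : ℝ => 2 * lam * t) (2 * lam) t := by
      simpa using (hasDerivAt_id t).const_mul (2 * lam)
    have := h2.sub h3
    simp only [one_mul] at this
    refine this.congr_deriv ?_
    simp only [hφ''_def]
    ring_nf
  have hφ'c : φ' c = 0 := by
    simp only [hφ'_def]
    rw [hlam_def]
    field_simp
    ring
  have h2pow : (b + c) ^ (p - 1) = (b + c) ^ (p - 2) * (b + c) := by
    rw [← Real.rpow_add_one hbc.ne' (p - 2)]; ring_nf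
  have hbcc : b + c < (p - 1) * c := by
    have h' : 2 * b < (p - 2) * c := (div_lt_iff₀ hc).mp hpc
    nlinarith
  have hkey : 2 * lam < p * (p - 1) * (b + c) ^ (p - 2) := by
    have e : 2 * lam * c = p * ((b + c) ^ (p - 2) * (b + c)) := by
      rw [hlam_def]; rw [← h2pow]; field_simp
    have hpow : 0 < (b + c) ^ (p - 2) := Real.rpow_pos_of_pos hbc _
    rw [← mul_lt_mul_iff_left₀ hc, e]
    nlinarith [mul_pos hp0 hpow]
  -- φ'' positive on [c, ∞)
  have hφ''pos : ∀ s : ℝ, c ≤ s → 0 < φ'' s := by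
    intro s hs
    have hbs : b + c ≤ b + s := by linarith
    have h1 : (b + c) ^ (p - 2) ≤ (b + s) ^ (p - 2) :=
      Real.rpow_le_rpow hbc.le hbs (by linarith)
    have : p * (p - 1) * (b + c) ^ (p - 2) ≤ p * (p - 1) * (b + s) ^ (p - 2) := by
      apply mul_le_mul_of_nonneg_left h1; nlinarith
    simp only [hφ''_def]
    linarith
  have hφcont : ContinuousOn φ (Ici 0) := fun x hx =>
    ((F1 x hx).continuousAt).continuousWithinAt
  have hφ'cont : ContinuousOn φ' (Ici 0) := fun x hx =>
    ((F2 x hx).continuousAt).continuousWithinAt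
  -- Case t > c
  have case_gt : ∀ t : ℝ, c < t → φ c < φ t := by
    intro t ht
    have hmono' : StrictMonoOn φ' (Ici c) := by
      apply strictMonoOn_of_deriv_pos (convex_Ici c)
        (hφ'cont.mono (Ici_subset_Ici.mpr hc.le))
      intro x hx
      rw [interior_Ici] at hx
      rw [(F2 x (by linarith [hx.out] : (0:ℝ) ≤ x)).deriv]
      exact hφ''pos x (le_of_lt hx)
    have hφ'pos : ∀ x : ℝ, c < x → 0 < φ' x := by
      intro x hx
      have := hmono' (self_mem_Ici) (le_of_lt hx : c ≤ x) hx
      rwa [hφ'c] at this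
    have hmono : StrictMonoOn φ (Ici c) := by
      apply strictMonoOn_of_deriv_pos (convex_Ici c)
        (hφcont.mono (Ici_subset_Ici.mpr hc.le))
      intro x hx
      rw [interior_Ici] at hx
      rw [(F1 x (by linarith [hx.out] : (0:ℝ) ≤ x)).deriv]
      exact hφ'pos x hx
    exact hmono self_mem_Ici (le_of_lt ht) ht
  -- φ 0 > φ c
  have h0c : φ c < φ 0 := by
    have h1 : φ 0 = b ^ p := by simp [hφ_def]
    have h2 : φ c = (b + c) ^ (p - 1) * ((b + c) - p * c / 2) := by
      simp only [hφ_def, hlam_def]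
      have hp' : (b + c) ^ p = (b + c) ^ (p - 1) * (b + c) := by
        rw [← Real.rpow_add_one hbc.ne' (p - 1)]; ring_nf
      rw [hp']
      field_simp
    have h3 : (b + c) - p * c / 2 < 0 := by
      have h' : 2 * b < (p - 2) * c := (div_lt_iff₀ hc).mp hpc
      nlinarith
    have h4 : 0 < b ^ p := Real.rpow_pos_of_pos hb _
    have h5 : 0 < (b + c) ^ (p - 1) := Real.rpow_pos_of_pos hbc _
    rw [h1, h2]
    nlinarith [mul_pos h5 (neg_pos.mpr h3)]
  -- strict convexity of φ' on Icc 0 c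
  have hSC : StrictConvexOn ℝ (Icc 0 c) φ' := by
    apply StrictMonoOn.strictConvexOn_of_deriv (convex_Icc 0 c)
      (hφ'cont.mono Icc_subset_Ici_self)
    intro x hx y hy hxy
    rw [interior_Icc] at hx hy
    rw [(F2 x hx.1.le).deriv, (F2 y hy.1.le).deriv]
    simp only [hφ''_def]
    have h1 : (b + x) ^ (p - 2) < (b + y) ^ (p - 2) := by
      apply Real.rpow_lt_rpow (by linarith [hx.1] : (0:ℝ) ≤ b + x) (by linarith) (by linarith)
    nlinarith [mul_pos (mul_pos hp0 (by linarith : (0:ℝ) < p - 1)) (sub_pos.mpr h1)]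
  -- no interior critical point can beat c
  have NoIntCrit : ∀ x : ℝ, x ∈ Ioo 0 c → φ' x = 0 → φ c < φ x := by
    intro x hx hcrit
    have hφ'neg : ∀ y : ℝ, x < y → y < c → φ' y < 0 := by
      intro y hxy hyc
      have hxc : x < c := hx.2
      set a : ℝ := (c - y) / (c - x) with ha_def
      set a' : ℝ := (y - x) / (c - x) with ha'_def
      have hcx : (0:ℝ) < c - x := by linarith
      have ha : 0 < a := div_pos (by linarith) hcx
      have ha' : 0 < a' := div_pos (by linarith) hcx
      have hab : a + a' = 1 := by
        rw [ha_def, ha'_def, ← add_div, div_eq_one_iff_eq hcx.ne']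
        ring
      have hcomb : a • x + a' • c = y := by
        simp only [smul_eq_mul, ha_def, ha'_def]
        field_simp
        ring
      have := hSC.2 (mem_Icc.mpr ⟨hx.1.le, hxc.le⟩) (mem_Icc.mpr ⟨hc.le, le_refl c⟩)
        (by exact ne_of_lt hxc) ha ha' hab
      rw [hcomb, hcrit, hφ'c] at this
      simpa using this
    have hanti : StrictAntiOn φ (Icc x c) := by
      apply strictAntiOn_of_deriv_neg (convex_Icc x c)
        (hφcont.mono (fun y hy => (hx.1.le.trans hy.1 : (0:ℝ) ≤ y)))
      intro y hy
      rw [interior_Icc] at hy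
      rw [(F1 y (by linarith [hx.1, hy.1] : (0:ℝ) ≤ y)).deriv]
      exact hφ'neg y hy.1 hy.2
    exact hanti (left_mem_Icc.mpr hx.2.le) (right_mem_Icc.mpr hx.2.le) hx.2
  -- main claim : φ c < φ t for t ∈ [0,c)
  have main : ∀ t : ℝ, 0 ≤ t → t ≠ c → φ c < φ t := by
    intro t ht htc
    rcases lt_or_gt_of_ne htc with htlt | htgt
    swap
    · exact case_gt t htgt
    -- t < c
    obtain ⟨m, hmK, hmin⟩ := (isCompact_Icc (a := (0:ℝ)) (b := c)).exists_isMinOn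
      (nonempty_Icc.mpr hc.le) (hφcont.mono Icc_subset_Ici_self)
    have hIntCase : ∀ z : ℝ, z ∈ Ioo 0 c → IsMinOn φ (Icc 0 c) z → False := by
      intro z hz hminz
      have hloc : IsLocalMin φ z := by
        apply hminz.isLocalMin
        exact Icc_mem_nhds hz.1 hz.2
      have hderiv0 : φ' z = 0 := by
        have := hloc.deriv_eq_zero
        rwa [(F1 z hz.1.le).deriv] at this
      have h1 := NoIntCrit z hz hderiv0
      have h2 := hminz (right_mem_Icc.mpr hc.le)
      simp only [IsMinOn, IsMinFilter] at h2
      have : φ c < φ c := lt_of_lt_of_le h1 h2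
      exact lt_irrefl _ this
    rcases eq_or_lt_of_le hmK.1 with hm0 | hm0
    · -- m = 0
      have := hmin (mem_Icc.mpr ⟨ht, htlt.le⟩)
      rw [← hm0] at this
      calc φ c < φ 0 := h0c
        _ ≤ φ t := this
    rcases eq_or_lt_of_le hmK.2 with hmc | hmc
    swap
    · exact (hIntCase m ⟨hm0, hmc⟩ hmin).elim
    -- m = c : min value is φ c
    have hminc : IsMinOn φ (Icc 0 c) c := by rwa [hmc] at hmin
    have hφt : φ c ≤ φ t := hminc (mem_Icc.mpr ⟨ht, htlt.le⟩)
    rcases eq_or_lt_of_le hφt with heq | hlt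
    swap
    · exact hlt
    -- φ c = φ t : t is a min point
    have hmint : IsMinOn φ (Icc 0 c) t := by
      intro y hy
      have := hminc hy
      simp only [IsMinOn, IsMinFilter] at *
      rw [← heq]; exact this
    have ht0 : 0 < t := by
      rcases eq_or_lt_of_le ht with h | h
      · exfalso; rw [← h] at heq; exact absurd heq.symm (ne_of_gt h0c)
      · exact h
    exact (hIntCase t ⟨ht0, htlt⟩ hmint).elim
  intro t ht htc
  have := main t ht htc
  simp only [hφ_def] at this
  linarith

lemma dot_nonneg {k : ℕ} (x : Fin k → ℝ) : 0 ≤ x ⬝ᵥ x :=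
  Finset.sum_nonneg fun i _ => mul_self_nonneg (x i)

lemma dot_cs {k : ℕ} (v x : Fin k → ℝ) : (v ⬝ᵥ x) ^ 2 ≤ (v ⬝ᵥ v) * (x ⬝ᵥ x) := by
  have := Finset.sum_mul_sq_le_sq_mul_sq Finset.univ v x
  simpa [dotProduct, pow_two] using this

lemma euclid_norm_sq {k : ℕ} (y : Fin k → ℝ) :
    ‖(WithLp.equiv 2 (Fin k → ℝ)).symm y‖ ^ 2 = y ⬝ᵥ y := by
  rw [EuclideanSpace.norm_eq]
  rw [Real.sq_sqrt (by positivity)]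
  simp [dotProduct, Real.norm_eq_abs, sq_abs, pow_two]

lemma pair_entry {n k : ℕ} (V : Matrix (Fin n) (Fin k) ℝ) {i j : Fin n} (hij : i ≠ j)
    (t s : Fin k) :
    (Vᵀ * diagS {i, j} * V) t s = V i t * V i s + V j t * V j s := by
  rw [Matrix.mul_apply]
  have e : ∀ u : Fin n, (Vᵀ * diagS {i, j}) t u * V u s
      = if u ∈ ({i, j} : Finset (Fin n)) then V u t * V u s else 0 := by
    intro u
    rw [diagS, Matrix.mul_diagonal]
    by_cases hu : u ∈ ({i, j} : Finset (Fin n)) <;> simp [hu, Matrix.transpose_apply]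
  rw [Finset.sum_congr rfl fun u _ => e u, Finset.sum_ite_mem, Finset.univ_inter,
    Finset.sum_pair hij]

lemma pair_mulVec {n k : ℕ} (V : Matrix (Fin n) (Fin k) ℝ) {i j : Fin n} (hij : i ≠ j)
    (x : Fin k → ℝ) :
    (Vᵀ * diagS {i, j} * V).mulVec x = (V i ⬝ᵥ x) • V i + (V j ⬝ᵥ x) • V j := by
  funext t
  simp only [Matrix.mulVec, dotProduct, Pi.add_apply, Pi.smul_apply, smul_eq_mul]
  rw [Finset.sum_congr rfl fun s _ => by rw [pair_entry V hij t s]]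
  simp only [add_mul]
  rw [Finset.sum_add_distrib]
  have e1 : ∑ s, V i t * V i s * x s = (∑ s, V i s * x s) * V i t := by
    rw [Finset.sum_mul]
    exact Finset.sum_congr rfl fun s _ => by ring
  have e2 : ∑ s, V j t * V j s * x s = (∑ s, V j s * x s) * V j t := by
    rw [Finset.sum_mul]
    exact Finset.sum_congr rfl fun s _ => by ring
  rw [e1, e2]

set_option maxHeartbeats 1000000 in
lemma opNorm_pair {n k : ℕ} (V : Matrix (Fin n) (Fin k) ℝ) {i j : Fin n} (hij : i ≠ j)
    {b : ℝ} (hb : 0 < b) (hii : (V * Vᵀ) i i = b) (hjj : (V * Vᵀ) j j = b) :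
    opNorm (Vᵀ * diagS {i, j} * V) = b + |(V * Vᵀ) i j| := by
  classical
  have hgg : V i ⬝ᵥ V i = b := by
    rw [← hii, Matrix.mul_apply]; simp [dotProduct, Matrix.transpose_apply]
  have hhh : V j ⬝ᵥ V j = b := by
    rw [← hjj, Matrix.mul_apply]; simp [dotProduct, Matrix.transpose_apply]
  set a : ℝ := (V * Vᵀ) i j with ha
  have hgh : V i ⬝ᵥ V j = a := by
    rw [ha, Matrix.mul_apply]; simp [dotProduct, Matrix.transpose_apply]
  have hhg : V j ⬝ᵥ V i = a := by rw [← hgh]; exact dotProduct_comm _ _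
  set r : ℝ := b + |a| with hr
  have hr0 : 0 < r := by have := abs_nonneg a; rw [hr]; linarith
  have habs : ∀ u w : ℝ, 2 * (u * w) * a ≤ |a| * (u ^ 2 + w ^ 2) := by
    intro u w
    rcases abs_cases a with ⟨he, _⟩ | ⟨he, hn⟩
    · rw [he]; nlinarith [sq_nonneg (u - w)]
    · rw [he]; nlinarith [sq_nonneg (u + w)]
  have comb_self : ∀ u w : ℝ,
      (u • V i + w • V j) ⬝ᵥ (u • V i + w • V j) = b * (u ^ 2 + w ^ 2) + 2 * (u * w) * a := by
    intro u w
    simp only [add_dotProduct, dotProduct_add, smul_dotProduct,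
      dotProduct_smul, smul_eq_mul, hgg, hhh, hgh, hhg]
    ring
  have comb_x : ∀ u w : ℝ, ∀ x : Fin k → ℝ,
      (u • V i + w • V j) ⬝ᵥ x = u * (V i ⬝ᵥ x) + w * (V j ⬝ᵥ x) := by
    intro u w x
    simp only [add_dotProduct, smul_dotProduct, smul_eq_mul]
  -- key1 : (Vi⬝x)² + (Vj⬝x)² ≤ r (x⬝x)
  have key1 : ∀ x : Fin k → ℝ, (V i ⬝ᵥ x) ^ 2 + (V j ⬝ᵥ x) ^ 2 ≤ r * (x ⬝ᵥ x) := by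
    intro x
    set u := V i ⬝ᵥ x with hu
    set w := V j ⬝ᵥ x with hw
    have cs := dot_cs (u • V i + w • V j) x
    rw [comb_x, comb_self] at cs
    have hvx : u * u + w * w = u ^ 2 + w ^ 2 := by ring
    have hb2 : b * (u ^ 2 + w ^ 2) + 2 * (u * w) * a ≤ r * (u ^ 2 + w ^ 2) := by
      have := habs u w; rw [hr]; nlinarith
    have hxx : 0 ≤ x ⬝ᵥ x := dot_nonneg x
    rcases eq_or_lt_of_le (by positivity : (0:ℝ) ≤ u ^ 2 + w ^ 2) with h0 | h0
    · have hu0 : u ^ 2 + w ^ 2 = 0 := h0.symm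
      rw [hu0]
      positivity
    · have step : (u ^ 2 + w ^ 2) ^ 2 ≤ r * (u ^ 2 + w ^ 2) * (x ⬝ᵥ x) := by
        calc (u ^ 2 + w ^ 2) ^ 2 = (u * u + w * w) ^ 2 := by ring
          _ ≤ (b * (u ^ 2 + w ^ 2) + 2 * (u * w) * a) * (x ⬝ᵥ x) := cs
          _ ≤ r * (u ^ 2 + w ^ 2) * (x ⬝ᵥ x) := mul_le_mul_of_nonneg_right hb2 hxx
      nlinarith
  have key2 : ∀ x : Fin k → ℝ,
      ((Vᵀ * diagS {i, j} * V).mulVec x) ⬝ᵥ ((Vᵀ * diagS {i, j} * V).mulVec x)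
        ≤ r ^ 2 * (x ⬝ᵥ x) := by
    intro x
    rw [pair_mulVec V hij x, comb_self]
    have h1 : b * ((V i ⬝ᵥ x) ^ 2 + (V j ⬝ᵥ x) ^ 2) + 2 * ((V i ⬝ᵥ x) * (V j ⬝ᵥ x)) * a
        ≤ r * ((V i ⬝ᵥ x) ^ 2 + (V j ⬝ᵥ x) ^ 2) := by
      have := habs (V i ⬝ᵥ x) (V j ⬝ᵥ x); rw [hr]; nlinarith
    have h2 := key1 x
    calc b * ((V i ⬝ᵥ x) ^ 2 + (V j ⬝ᵥ x) ^ 2) + 2 * ((V i ⬝ᵥ x) * (V j ⬝ᵥ x)) * a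
        ≤ r * ((V i ⬝ᵥ x) ^ 2 + (V j ⬝ᵥ x) ^ 2) := h1
      _ ≤ r * (r * (x ⬝ᵥ x)) := mul_le_mul_of_nonneg_left h2 hr0.le
      _ = r ^ 2 * (x ⬝ᵥ x) := by ring
  have hTapp : ∀ y : Fin k → ℝ,
      Matrix.toEuclideanCLM (𝕜 := ℝ) (Vᵀ * diagS {i, j} * V) ((WithLp.equiv 2 (Fin k → ℝ)).symm y)
        = (WithLp.equiv 2 (Fin k → ℝ)).symm ((Vᵀ * diagS {i, j} * V).mulVec y) := by
    intro y
    exact Matrix.toEuclideanCLM_toLp _ y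
  rw [opNorm]
  apply le_antisymm
  · apply ContinuousLinearMap.opNorm_le_bound _ hr0.le
    intro x
    have hx : x = (WithLp.equiv 2 (Fin k → ℝ)).symm (WithLp.equiv 2 (Fin k → ℝ) x) := by simp
    set y := WithLp.equiv 2 (Fin k → ℝ) x with hy
    have h1 : ‖Matrix.toEuclideanCLM (𝕜 := ℝ) (Vᵀ * diagS {i, j} * V) x‖ ^ 2
        ≤ (r * ‖x‖) ^ 2 := by
      conv_lhs => rw [hx, hTapp y]
      rw [euclid_norm_sq]
      have h2 : ‖x‖ ^ 2 = y ⬝ᵥ y := by conv_lhs => rw [hx]; rw [euclid_norm_sq]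
      calc (Vᵀ * diagS {i, j} * V).mulVec y ⬝ᵥ (Vᵀ * diagS {i, j} * V).mulVec y
          ≤ r ^ 2 * (y ⬝ᵥ y) := key2 y
        _ = (r * ‖x‖) ^ 2 := by rw [mul_pow, h2]
    have h3 : (0:ℝ) ≤ r * ‖x‖ := mul_nonneg hr0.le (norm_nonneg x)
    nlinarith [norm_nonneg (Matrix.toEuclideanCLM (𝕜 := ℝ) (Vᵀ * diagS {i, j} * V) x)]
  · -- lower bound
    obtain ⟨s, hs2, hsa⟩ : ∃ s : ℝ, s * s = 1 ∧ s * a = |a| := by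
      rcases le_or_gt 0 a with h | h
      · exact ⟨1, by norm_num, by rw [abs_of_nonneg h]; ring⟩
      · exact ⟨-1, by norm_num, by rw [abs_of_neg h]; ring⟩
    set v : Fin k → ℝ := (1:ℝ) • V i + s • V j with hv
    have hvv : v ⬝ᵥ v = 2 * r := by
      rw [hv, comb_self]
      rw [hr]
      linear_combination b * hs2 + 2 * hsa
    have hMv : (Vᵀ * diagS {i, j} * V).mulVec v = r • v := by
      rw [pair_mulVec V hij v]
      have d1 : V i ⬝ᵥ v = r := by
        rw [dotProduct_comm, hv, comb_x]
        rw [hgg, hhg, hr, ← hsa]; ring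
      have d2 : V j ⬝ᵥ v = s * r := by
        rw [dotProduct_comm, hv, comb_x, hgh, hhh, hr]
        linear_combination (-a) * hs2 + s * hsa
      rw [d1, d2, hv]
      funext t
      simp only [Pi.add_apply, Pi.smul_apply, smul_eq_mul]
      ring
    set x : EuclideanSpace ℝ (Fin k) := (WithLp.equiv 2 (Fin k → ℝ)).symm v with hx
    have hTx : Matrix.toEuclideanCLM (𝕜 := ℝ) (Vᵀ * diagS {i, j} * V) x = r • x := by
      rw [hx, hTapp v, hMv, WithLp.equiv_symm_apply, WithLp.toLp_smul]
    have hnx : ‖x‖ ^ 2 = 2 * r := by rw [hx, euclid_norm_sq, hvv]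
    have hnx0 : 0 < ‖x‖ := by
      rcases (norm_nonneg x).lt_or_eq with h | h
      · exact h
      · exfalso; rw [← h] at hnx; simp at hnx; linarith
    have hle := (Matrix.toEuclideanCLM (𝕜 := ℝ) (Vᵀ * diagS {i, j} * V)).le_opNorm x
    rw [hTx, norm_smul, Real.norm_eq_abs, abs_of_pos hr0] at hle
    exact le_of_mul_le_mul_right (by linarith [hle]) hnx0

-- fiber of the pair map
lemma pair_fiber {n : ℕ} {a b : Fin n} (hab : a ≠ b) :
    (Finset.univ.offDiag.filter
        fun q : Fin n × Fin n => ({q.1, q.2} : Finset (Fin n)) = {a, b})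
      = {(a, b), (b, a)} := by
  ext ⟨x, y⟩
  simp only [Finset.mem_filter, Finset.mem_offDiag, Finset.mem_univ, true_and,
    Finset.mem_insert, Finset.mem_singleton, Prod.mk.injEq]
  constructor
  · rintro ⟨hxy, he⟩
    have : ({x, y} : Set (Fin n)) = {a, b} := by
      have := congrArg (fun s : Finset (Fin n) => (s : Set (Fin n))) he
      simpa using this
    rcases Set.pair_eq_pair_iff.mp this with ⟨h1, h2⟩ | ⟨h1, h2⟩
    · exact Or.inl ⟨h1, h2⟩
    · exact Or.inr ⟨h1, h2⟩
  · rintro (⟨rfl, rfl⟩ | ⟨rfl, rfl⟩)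
    · exact ⟨hab, rfl⟩
    · exact ⟨hab.symm, by rw [Finset.pair_comm]⟩

-- reindexing pairs
lemma sum_pairs {n : ℕ} (f : Finset (Fin n) → ℝ) :
    ∑ q ∈ (Finset.univ : Finset (Fin n)).offDiag, f {q.1, q.2}
      = 2 * ∑ S ∈ Finset.univ.filter fun S : Finset (Fin n) => S.card = 2, f S := by
  classical
  have hmaps : ∀ q ∈ (Finset.univ : Finset (Fin n)).offDiag,
      ({q.1, q.2} : Finset (Fin n)) ∈ Finset.univ.filter
        fun S : Finset (Fin n) => S.card = 2 := by
    intro q hq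
    rw [Finset.mem_offDiag] at hq
    simp [Finset.card_pair hq.2.2]
  rw [← Finset.sum_fiberwise_of_maps_to hmaps (fun q => f {q.1, q.2})]
  rw [Finset.mul_sum]
  apply Finset.sum_congr rfl
  intro S hS
  rw [Finset.mem_filter] at hS
  obtain ⟨a, b, hab, rfl⟩ := Finset.card_eq_two.mp hS.2
  rw [pair_fiber hab]
  rw [Finset.sum_insert (by simp [Prod.ext_iff, hab]), Finset.sum_singleton]
  have e1 : ({a, b} : Finset (Fin n)) = {a, b} := rfl
  have e2 : ({b, a} : Finset (Fin n)) = {a, b} := Finset.pair_comm b a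
  rw [e2]
  ring

-- trace identity
lemma offDiag_sum_sq {n k : ℕ} (V : Matrix (Fin n) (Fin k) ℝ) (hV : Vᵀ * V = 1)
    (hU : Uniform n k V) (hn : 0 < n) :
    ∑ q ∈ (Finset.univ : Finset (Fin n)).offDiag, ((V * Vᵀ) q.1 q.2) ^ 2
      = (k : ℝ) - (k : ℝ) ^ 2 / n := by
  classical
  have hGG : (V * Vᵀ) * (V * Vᵀ) = V * Vᵀ := by
    rw [Matrix.mul_assoc, ← Matrix.mul_assoc Vᵀ V, hV, Matrix.one_mul]
  have hsym : ∀ i j, (V * Vᵀ) i j = (V * Vᵀ) j i := by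
    intro i j
    rw [Matrix.mul_apply, Matrix.mul_apply]
    exact Finset.sum_congr rfl fun s _ => by
      rw [Matrix.transpose_apply, Matrix.transpose_apply, mul_comm]
  have htot : ∑ i : Fin n, ∑ j : Fin n, ((V * Vᵀ) i j) ^ 2 = (k : ℝ) := by
    have e1 : ∀ i : Fin n, ∑ j : Fin n, ((V * Vᵀ) i j) ^ 2
        = ((V * Vᵀ) * (V * Vᵀ)) i i := by
      intro i
      rw [Matrix.mul_apply]
      exact Finset.sum_congr rfl fun s _ => by rw [pow_two, hsym i s]
    rw [Finset.sum_congr rfl fun i _ => e1 i]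
    rw [hGG]
    rw [Finset.sum_congr rfl fun i _ => hU i]
    rw [Finset.sum_const, Finset.card_univ, Fintype.card_fin, nsmul_eq_mul]
    field_simp
  have hsplit : ∑ q ∈ (Finset.univ : Finset (Fin n)).diag, ((V * Vᵀ) q.1 q.2) ^ 2
      + ∑ q ∈ (Finset.univ : Finset (Fin n)).offDiag, ((V * Vᵀ) q.1 q.2) ^ 2
      = (k : ℝ) := by
    rw [← Finset.sum_union (Finset.disjoint_diag_offDiag _), Finset.diag_union_offDiag]
    rw [← htot, ← Finset.sum_product']

  have hdiag : ∑ q ∈ (Finset.univ : Finset (Fin n)).diag, ((V * Vᵀ) q.1 q.2) ^ 2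
      = (k : ℝ) ^ 2 / n := by
    rw [Finset.sum_diag]
    rw [Finset.sum_congr rfl fun i _ => by rw [hU i]]
    rw [Finset.sum_const, Finset.card_univ, Fintype.card_fin, nsmul_eq_mul]
    rw [div_pow]
    have : (n : ℝ) ≠ 0 := Nat.cast_ne_zero.mpr hn.ne'
    field_simp
  linarith

lemma main_est {n k : ℕ} (hk : 1 ≤ k) (hkn : k < n) {p : ℝ}
    (hp2 : 2 < p) (hpc : 2 * ((k : ℝ) / n) / c n k < p - 2)
    (V : Matrix (Fin n) (Fin k) ℝ) (hV : Vᵀ * V = 1) (hU : Uniform n k V) :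
    (k : ℝ) / n + c n k ≤ errP V 2 p ∧
      (errP V 2 p = (k : ℝ) / n + c n k ↔ TwoUniform n k V) := by
  classical
  have hn : 0 < n := lt_of_le_of_lt (Nat.zero_le k) hkn
  have hnR : (0:ℝ) < n := Nat.cast_pos.mpr hn
  have hkR : (0:ℝ) < k := by exact_mod_cast lt_of_lt_of_le Nat.zero_lt_one hk
  have hknR : (k:ℝ) < n := by exact_mod_cast hkn
  have hn1R : (0:ℝ) < (n:ℝ) - 1 := by
    have : (1:ℝ) ≤ k := by exact_mod_cast hk
    linarith
  set b : ℝ := (k:ℝ) / n with hbdef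
  have hb : 0 < b := div_pos hkR hnR
  set cc : ℝ := c n k with hccdef
  have hfrac : 0 < (k:ℝ) * ((n:ℝ) - k) / ((n:ℝ) ^ 2 * ((n:ℝ) - 1)) :=
    div_pos (mul_pos hkR (by linarith)) (mul_pos (by positivity) hn1R)
  have hcc2 : cc ^ 2 = (k:ℝ) * ((n:ℝ) - k) / ((n:ℝ) ^ 2 * ((n:ℝ) - 1)) := by
    rw [hccdef, c, Real.sq_sqrt hfrac.le]
  have hcc : 0 < cc := by
    rw [hccdef, c]
    exact Real.sqrt_pos.mpr hfrac
  have hbcc : 0 < b + cc := by linarith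
  have hp0 : 0 < p := by linarith
  set lam : ℝ := p * (b + cc) ^ (p - 1) / (2 * cc) with hlamdef
  set P2 := Finset.univ.filter fun S : Finset (Fin n) => S.card = 2 with hP2def
  set F : Finset (Fin n) → ℝ := fun S => opNorm (Vᵀ * diagS S * V) with hFdef
  have hNcard : P2.card = n.choose 2 := by
    have he : P2 = Finset.powersetCard 2 (Finset.univ : Finset (Fin n)) := by
      ext S
      simp [hP2def, Finset.mem_powersetCard, Finset.subset_univ]
    rw [he, Finset.card_powersetCard, Finset.card_univ, Fintype.card_fin]
  have hn2 : 2 ≤ n := by omega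
  have hNpos : 0 < ((n.choose 2 : ℕ) : ℝ) := by
    have := Nat.choose_pos (n := n) (k := 2) hn2
    exact_mod_cast this
  have hFel : ∀ i j : Fin n, i ≠ j → F {i, j} = b + |(V * Vᵀ) i j| := by
    intro i j hij
    exact opNorm_pair V hij hb (hU i) (hU j)
  have hFnn : ∀ S ∈ P2, 0 ≤ F S - b := by
    intro S hS
    rw [hP2def, Finset.mem_filter] at hS
    obtain ⟨i, j, hij, rfl⟩ := Finset.card_eq_two.mp hS.2
    rw [hFel i j hij]
    simp [abs_nonneg]
  -- sum of squares identity
  have hsum_sq : ∑ S ∈ P2, (F S - b) ^ 2 = ((n.choose 2 : ℕ) : ℝ) * cc ^ 2 := by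
    have h1 : ∑ q ∈ (Finset.univ : Finset (Fin n)).offDiag, (F {q.1, q.2} - b) ^ 2
        = 2 * ∑ S ∈ P2, (F S - b) ^ 2 := by
      have := sum_pairs (n := n) fun S => (F S - b) ^ 2
      rw [← hP2def] at this
      exact this
    have h2 : ∑ q ∈ (Finset.univ : Finset (Fin n)).offDiag, (F {q.1, q.2} - b) ^ 2
        = ∑ q ∈ (Finset.univ : Finset (Fin n)).offDiag, ((V * Vᵀ) q.1 q.2) ^ 2 := by
      apply Finset.sum_congr rfl
      intro q hq
      rw [Finset.mem_offDiag] at hq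
      rw [hFel q.1 q.2 hq.2.2]
      simp [sq_abs]
    have h3 := offDiag_sum_sq V hV hU hn
    have h4 : ((n.choose 2 : ℕ) : ℝ) = (n:ℝ) * ((n:ℝ) - 1) / 2 := by
      rw [Nat.cast_choose_two]
    have h5 : ((n.choose 2 : ℕ) : ℝ) * cc ^ 2 = ((k:ℝ) - (k:ℝ) ^ 2 / n) / 2 := by
      rw [h4, hcc2]
      field_simp
    rw [h2, h3] at h1
    rw [h5]
    linarith
  -- per-term inequality
  have hterm : ∀ S ∈ P2,
      (b + cc) ^ p + lam * ((F S - b) ^ 2 - cc ^ 2) ≤ F S ^ p := by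
    intro S hS
    have hFb : F S = b + (F S - b) := by ring
    by_cases h : F S - b = cc
    · rw [h]
      simp only [sub_self, mul_zero, add_zero]
      rw [hFb, h]
    · have := key_aux hb hcc hp2 hpc (F S - b) (hFnn S hS) h
      rw [hlamdef]
      calc (b + cc) ^ p + p * (b + cc) ^ (p - 1) / (2 * cc) * ((F S - b) ^ 2 - cc ^ 2)
          ≤ (b + (F S - b)) ^ p := this.le
        _ = F S ^ p := by rw [← hFb]
  have hterm_strict : ∀ S ∈ P2, F S - b ≠ cc →
      (b + cc) ^ p + lam * ((F S - b) ^ 2 - cc ^ 2) < F S ^ p := by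
    intro S hS h
    have := key_aux hb hcc hp2 hpc (F S - b) (hFnn S hS) h
    rw [hlamdef]
    calc (b + cc) ^ p + p * (b + cc) ^ (p - 1) / (2 * cc) * ((F S - b) ^ 2 - cc ^ 2)
        < (b + (F S - b)) ^ p := this
      _ = F S ^ p := by ring_nf
  -- the sum of lower bounds
  have hlb_sum : ∑ S ∈ P2, ((b + cc) ^ p + lam * ((F S - b) ^ 2 - cc ^ 2))
      = ((n.choose 2 : ℕ) : ℝ) * (b + cc) ^ p := by
    rw [Finset.sum_add_distrib, Finset.sum_const, hNcard, nsmul_eq_mul]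
    rw [← Finset.mul_sum, Finset.sum_sub_distrib, hsum_sq, Finset.sum_const, hNcard,
      nsmul_eq_mul]
    ring
  have hsum_ge : ((n.choose 2 : ℕ) : ℝ) * (b + cc) ^ p ≤ ∑ S ∈ P2, F S ^ p := by
    rw [← hlb_sum]
    exact Finset.sum_le_sum hterm
  have herrP : errP V 2 p = (((n.choose 2 : ℕ) : ℝ)⁻¹ * ∑ S ∈ P2, F S ^ p) ^ (1 / p) := by
    rw [errP]
  have havg_ge : (b + cc) ^ p ≤ ((n.choose 2 : ℕ) : ℝ)⁻¹ * ∑ S ∈ P2, F S ^ p := by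
    have e : (b + cc) ^ p = ((n.choose 2 : ℕ) : ℝ)⁻¹ * (((n.choose 2 : ℕ) : ℝ) * (b + cc) ^ p) := by
      field_simp
    rw [e]
    exact mul_le_mul_of_nonneg_left hsum_ge (inv_nonneg.mpr hNpos.le)
  have hbp : 0 < (b + cc) ^ p := Real.rpow_pos_of_pos hbcc p
  have havg_pos : 0 < ((n.choose 2 : ℕ) : ℝ)⁻¹ * ∑ S ∈ P2, F S ^ p :=
    lt_of_lt_of_le hbp havg_ge
  have h7 : ((b + cc) ^ p) ^ (1 / p) = b + cc := by
    rw [one_div, Real.rpow_rpow_inv hbcc.le hp0.ne']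
  have hge : b + cc ≤ errP V 2 p := by
    rw [herrP, ← h7]
    exact Real.rpow_le_rpow hbp.le havg_ge (by positivity)
  refine ⟨hge, ?_, ?_⟩
  · -- equality implies 2-uniform
    intro heq
    rw [herrP] at heq
    have havg_eq : ((n.choose 2 : ℕ) : ℝ)⁻¹ * ∑ S ∈ P2, F S ^ p = (b + cc) ^ p := by
      have e1 : ((((n.choose 2 : ℕ) : ℝ)⁻¹ * ∑ S ∈ P2, F S ^ p) ^ (1 / p)) ^ p
          = ((n.choose 2 : ℕ) : ℝ)⁻¹ * ∑ S ∈ P2, F S ^ p := by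
        rw [one_div, Real.rpow_inv_rpow havg_pos.le hp0.ne']
      rw [← e1, heq]
    have hsumEq : ∑ S ∈ P2, F S ^ p = ((n.choose 2 : ℕ) : ℝ) * (b + cc) ^ p := by
      rw [← havg_eq, ← mul_assoc, mul_inv_cancel₀ hNpos.ne', one_mul]
    have hzero : ∑ S ∈ P2, (F S ^ p - ((b + cc) ^ p + lam * ((F S - b) ^ 2 - cc ^ 2))) = 0 := by
      rw [Finset.sum_sub_distrib, hlb_sum, hsumEq]
      ring
    have hallzero := (Finset.sum_eq_zero_iff_of_nonneg
      (fun S hS => sub_nonneg.mpr (hterm S hS))).mp hzero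
    have hallc : ∀ S ∈ P2, F S - b = cc := by
      intro S hS
      by_contra hne
      have h1 := hterm_strict S hS hne
      have h2 := hallzero S hS
      rw [sub_eq_zero] at h2
      rw [h2] at h1
      exact lt_irrefl _ h1
    refine ⟨hU, ?_⟩
    intro i j hij
    have hSP : ({i, j} : Finset (Fin n)) ∈ P2 := by
      rw [hP2def, Finset.mem_filter]
      exact ⟨Finset.mem_univ _, Finset.card_pair hij⟩
    have h := hallc _ hSP
    rw [hFel i j hij] at h
    rw [← hccdef]
    linarith
  · -- 2-uniform implies equality
    intro h2U
    have hFc : ∀ S ∈ P2, F S ^ p = (b + cc) ^ p := by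
      intro S hS
      rw [hP2def, Finset.mem_filter] at hS
      obtain ⟨i, j, hij, rfl⟩ := Finset.card_eq_two.mp hS.2
      rw [hFel i j hij, h2U.2 i j hij, ← hccdef]
    have hsumEq : ∑ S ∈ P2, F S ^ p = ((n.choose 2 : ℕ) : ℝ) * (b + cc) ^ p := by
      rw [Finset.sum_congr rfl hFc, Finset.sum_const, hNcard, nsmul_eq_mul]
    rw [herrP, hsumEq, ← mul_assoc, inv_mul_cancel₀ hNpos.ne', one_mul, h7]



lemma hp_consequences {n k : ℕ} (hk : 1 ≤ k) (hkn : k < n) {p : ℝ}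
    (hp : 2 + Real.sqrt (5 * (k : ℝ) * ((n : ℝ) - 1) / ((n : ℝ) - k)) < p) :
    2 < p ∧ 2 * ((k : ℝ) / n) / c n k < p - 2 := by
  have hn : 0 < n := lt_of_le_of_lt (Nat.zero_le k) hkn
  have hnR : (0:ℝ) < n := Nat.cast_pos.mpr hn
  have hkR : (0:ℝ) < k := by exact_mod_cast lt_of_lt_of_le Nat.zero_lt_one hk
  have hknR : (k:ℝ) < n := by exact_mod_cast hkn
  have hn1R : (0:ℝ) < (n:ℝ) - 1 := by
    have : (1:ℝ) ≤ k := by exact_mod_cast hk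
    linarith
  have hq0 := Real.sqrt_nonneg (5 * (k : ℝ) * ((n : ℝ) - 1) / ((n : ℝ) - k))
  have hp2 : 2 < p := by linarith
  have hfrac : 0 < (k:ℝ) * ((n:ℝ) - k) / ((n:ℝ) ^ 2 * ((n:ℝ) - 1)) :=
    div_pos (mul_pos hkR (by linarith)) (mul_pos (by positivity) hn1R)
  have hcc2 : (c n k) ^ 2 = (k:ℝ) * ((n:ℝ) - k) / ((n:ℝ) ^ 2 * ((n:ℝ) - 1)) := by
    rw [c, Real.sq_sqrt hfrac.le]
  have hcc : 0 < c n k := by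
    rw [c]; exact Real.sqrt_pos.mpr hfrac
  refine ⟨hp2, ?_⟩
  have hb : 0 < (k:ℝ)/n := div_pos hkR hnR
  have hxnn : 0 ≤ 2 * ((k:ℝ)/n) / c n k := by positivity
  have hx : (2 * ((k:ℝ)/n) / c n k) ^ 2 ≤ 5 * (k : ℝ) * ((n : ℝ) - 1) / ((n : ℝ) - k) := by
    rw [div_pow, hcc2]
    have he : (2 * ((k:ℝ)/n)) ^ 2 / ((k:ℝ) * ((n:ℝ) - k) / ((n:ℝ) ^ 2 * ((n:ℝ) - 1)))
        = 4 * (k:ℝ) * ((n:ℝ) - 1) / ((n:ℝ) - k) := by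
      have h1 : (k:ℝ) ≠ 0 := hkR.ne'
      have h2 : (n:ℝ) ≠ 0 := hnR.ne'
      have h3 : (n:ℝ) - k ≠ 0 := by linarith
      have h4 : (n:ℝ) - 1 ≠ 0 := hn1R.ne'
      field_simp
      ring
    rw [he]
    have hd : 0 ≤ (k:ℝ) * ((n:ℝ) - 1) / ((n:ℝ) - k) :=
      div_nonneg (mul_nonneg hkR.le hn1R.le) (by linarith)
    have e4 : 4 * (k:ℝ) * ((n:ℝ) - 1) / ((n:ℝ) - k) = 4 * ((k:ℝ) * ((n:ℝ) - 1) / ((n:ℝ) - k)) := by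
      ring
    have e5 : 5 * (k:ℝ) * ((n:ℝ) - 1) / ((n:ℝ) - k) = 5 * ((k:ℝ) * ((n:ℝ) - 1) / ((n:ℝ) - k)) := by
      ring
    rw [e4, e5]
    linarith
  have : 2 * ((k:ℝ)/n) / c n k ≤ Real.sqrt (5 * (k : ℝ) * ((n : ℝ) - 1) / ((n : ℝ) - k)) := by
    rw [← Real.sqrt_sq hxnn]
    exact Real.sqrt_le_sqrt hx
  linarith


theorem statement2 (n k : ℕ) (hk : 1 ≤ k) (hkn : k < n) (p : ℝ)
    (hp : 2 + Real.sqrt (5 * (k : ℝ) * ((n : ℝ) - 1) / ((n : ℝ) - k)) < p) :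
    ((∃ W : Matrix (Fin n) (Fin k) ℝ, Wᵀ * W = 1 ∧ TwoUniform n k W) →
      ∀ V : Matrix (Fin n) (Fin k) ℝ, Vᵀ * V = 1 → Uniform n k V →
        ((k : ℝ) / n + c n k ≤ errP V 2 p ∧
          (errP V 2 p = (k : ℝ) / n + c n k ↔ TwoUniform n k V))) ∧
    ((¬ ∃ W : Matrix (Fin n) (Fin k) ℝ, Wᵀ * W = 1 ∧ TwoUniform n k W) →
      ∀ V : Matrix (Fin n) (Fin k) ℝ, Vᵀ * V = 1 → Uniform n k V →
        (k : ℝ) / n + c n k < errP V 2 p) := by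
  obtain ⟨hp2, hpc⟩ := hp_consequences hk hkn hp
  constructor
  · intro _ V hV hU
    exact main_est hk hkn hp2 hpc V hV hU
  · intro hno V hV hU
    obtain ⟨hge, hiff⟩ := main_est hk hkn hp2 hpc V hV hU
    rcases eq_or_lt_of_le hge with heq | hlt
    · exact absurd ⟨V, hV, hiff.mp heq.symm⟩ hno
    · exact hlt

end FramesErasures
end
end

section
/- Let F be a real 2-uniform (n,k)-frame with associated graph G_F. Then for every 1 ≤ m ≤ n, e_m^∞(F) ≤ k/n + (m−1)·c_{n,k}, and equality holds if and only if G_F contains an induced subgraph on m vertices that is complete bipartite. -/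
open Matrix
open scoped Classical RealInnerProductSpace

set_option maxHeartbeats 1000000
set_option synthInstance.maxHeartbeats 400000

noncomputable section

namespace FramesErasures

lemma clm_apply_symm {k : ℕ} (A : Matrix (Fin k) (Fin k) ℝ) (v : Fin k → ℝ) :
    Matrix.toEuclideanCLM (𝕜 := ℝ) A ((WithLp.equiv 2 _).symm v) =
      (WithLp.equiv 2 _).symm (A.mulVec v) :=
  Matrix.toEuclideanCLM_toLp A v

lemma abs_eig_le_opNorm {k : ℕ} {A : Matrix (Fin k) (Fin k) ℝ} {μ : ℝ} {v : Fin k → ℝ}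
    (hv : v ≠ 0) (h : A.mulVec v = μ • v) : |μ| ≤ opNorm A := by
  set T := Matrix.toEuclideanCLM (𝕜 := ℝ) A with hT
  set x : EuclideanSpace ℝ (Fin k) := (WithLp.equiv 2 _).symm v with hxdef
  have hx : x ≠ 0 := by
    simpa [hxdef] using hv
  have hTx : T x = μ • x := by
    rw [hxdef, hT, clm_apply_symm, h]
    rfl
  have h1 : ‖T x‖ = |μ| * ‖x‖ := by rw [hTx, norm_smul, Real.norm_eq_abs]
  have h2 := T.le_opNorm x
  rw [h1] at h2
  have hxpos : 0 < ‖x‖ := norm_pos_iff.mpr hx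
  exact le_of_mul_le_mul_right (by simpa [opNorm] using h2) hxpos

lemma exists_eigvec_opNorm {k : ℕ} (hk : 0 < k) {A : Matrix (Fin k) (Fin k) ℝ}
    (hA : Aᵀ = A) :
    ∃ (μ : ℝ) (v : Fin k → ℝ), |μ| = opNorm A ∧ v ≠ 0 ∧ A.mulVec v = μ • v := by
  haveI : Nonempty (Fin k) := ⟨⟨0, hk⟩⟩
  set T := Matrix.toEuclideanCLM (𝕜 := ℝ) A with hTdef
  have hsa : _root_.IsSelfAdjoint T := by
    have hstar : star A = A := by
      ext i j
      simpa [Matrix.star_eq_conjTranspose, Matrix.conjTranspose_apply] using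
        congrFun (congrFun hA i) j
    rw [_root_.IsSelfAdjoint, hTdef, ← map_star, hstar]
  -- symmetric form
  have hsym : ∀ x y : EuclideanSpace ℝ (Fin k), ⟪T x, y⟫ = ⟪x, T y⟫ := fun x y =>
    hsa.isSymmetric x y
  -- maximize ‖T x‖ on the unit sphere
  have hcpt : IsCompact (Metric.sphere (0 : EuclideanSpace ℝ (Fin k)) 1) :=
    isCompact_sphere _ _
  have hne : (Metric.sphere (0 : EuclideanSpace ℝ (Fin k)) 1).Nonempty := by
    refine NormedSpace.sphere_nonempty.mpr (by norm_num)
  obtain ⟨x₀, hx₀mem, hx₀max⟩ :=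
    hcpt.exists_isMaxOn hne ((T.continuous.norm).continuousOn)
  have hx₀ : ‖x₀‖ = 1 := mem_sphere_zero_iff_norm.mp hx₀mem
  have hx₀ne : x₀ ≠ 0 := by
    intro h; rw [h] at hx₀; simp at hx₀
  set a := ‖T‖ with hadef
  have ha0 : 0 ≤ a := norm_nonneg _
  -- ‖T x₀‖ = ‖T‖
  have hTx₀ : ‖T x₀‖ = a := by
    refine le_antisymm (by simpa [hx₀] using T.le_opNorm x₀) ?_
    refine T.opNorm_le_bound (norm_nonneg _) (fun y => ?_) |>.trans le_rfl
    rcases eq_or_ne y 0 with rfl | hy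
    · simp
    · have hyn : ‖y‖ ≠ 0 := norm_ne_zero_iff.mpr hy
      have hmem : (‖y‖⁻¹ • y) ∈ Metric.sphere (0 : EuclideanSpace ℝ (Fin k)) 1 := by
        simp [norm_smul, abs_of_nonneg (inv_nonneg.mpr (norm_nonneg y)), inv_mul_cancel₀ hyn]
      have := hx₀max hmem
      have this2 : ‖T (‖y‖⁻¹ • y)‖ ≤ ‖T x₀‖ := this
      rw [show T (‖y‖⁻¹ • y) = ‖y‖⁻¹ • T y from T.map_smul _ _, norm_smul, Real.norm_eq_abs,
        abs_of_nonneg (inv_nonneg.mpr (norm_nonneg y))] at this2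
      calc ‖T y‖ = ‖y‖ * (‖y‖⁻¹ * ‖T y‖) := by field_simp
      _ ≤ ‖y‖ * ‖T x₀‖ := by
          refine mul_le_mul_of_nonneg_left ?_ (norm_nonneg y)
          exact this2
      _ = ‖T x₀‖ * ‖y‖ := mul_comm _ _
  -- T (T x₀) = a ^ 2 • x₀
  have hkey : T (T x₀) = (a ^ 2) • x₀ := by
    have hinner : ⟪T (T x₀), x₀⟫ = a ^ 2 := by
      rw [hsym (T x₀) x₀]
      rw [real_inner_comm]
      rw [real_inner_self_eq_norm_sq]
      rw [hTx₀]
    have hnTT : ‖T (T x₀)‖ ≤ a ^ 2 := by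
      calc ‖T (T x₀)‖ ≤ a * ‖T x₀‖ := T.le_opNorm _
      _ = a ^ 2 := by rw [hTx₀]; ring
    have hz : ‖T (T x₀) - (a ^ 2) • x₀‖ ^ 2 ≤ 0 := by
      rw [norm_sub_sq_real]
      have h1 : ⟪T (T x₀), (a ^ 2) • x₀⟫ = a ^ 2 * (a ^ 2) := by
        rw [real_inner_smul_right, hinner]
      rw [h1]
      have h2 : ‖(a ^ 2) • x₀‖ ^ 2 = (a ^ 2) ^ 2 := by
        rw [norm_smul, Real.norm_eq_abs, abs_of_nonneg (sq_nonneg a), hx₀]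
        ring
      rw [h2]
      nlinarith [norm_nonneg (T (T x₀))]
    have := le_antisymm hz (sq_nonneg _)
    have hn0 : ‖T (T x₀) - (a ^ 2) • x₀‖ = 0 := by
      nlinarith [norm_nonneg (T (T x₀) - (a ^ 2) • x₀)]
    have := norm_eq_zero.mp hn0
    exact sub_eq_zero.mp this
  have hconv : ∀ (μ : ℝ) (x : EuclideanSpace ℝ (Fin k)), x ≠ 0 → T x = μ • x →
      ∃ v : Fin k → ℝ, v ≠ 0 ∧ A.mulVec v = μ • v := by
    intro μ x hx hTx
    refine ⟨WithLp.equiv 2 _ x, by simpa using hx, ?_⟩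
    have := Matrix.ofLp_toEuclideanCLM (𝕜 := ℝ) A x
    rw [hTx] at this
    exact this.symm
  have hopa : opNorm A = a := rfl
  by_cases hcase : T x₀ = (-a) • x₀
  · obtain ⟨v, hv, hvm⟩ := hconv (-a) x₀ hx₀ne hcase
    exact ⟨-a, v, by rw [abs_neg, abs_of_nonneg ha0, hopa], hv, hvm⟩
  · set y := T x₀ + a • x₀ with hydef
    have hy : y ≠ 0 := by
      intro h
      apply hcase
      have : T x₀ = -(a • x₀) := by
        rw [eq_neg_iff_add_eq_zero]
        simpa [hydef] using h
      rw [this, neg_smul]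
    have hTy : T y = a • y := by
      rw [hydef, map_add, hkey]
      rw [show T (a • x₀) = a • T x₀ from T.map_smul _ _]
      rw [smul_add]
      rw [smul_smul]
      ext i
      simp
      ring
    obtain ⟨v, hv, hvm⟩ := hconv a y hy hTy
    exact ⟨a, v, by rw [abs_of_nonneg ha0, hopa], hv, hvm⟩


section Comb

variable {n m : ℕ} {S : Finset (Fin n)} {Q : Matrix (Fin n) (Fin n) ℝ} {w : Fin n → ℝ}

lemma qform_restrict (hd : ∀ i, Q i i = 0) (hw : ∀ i ∉ S, w i = 0) :
    ∑ i, ∑ j, Q i j * (w i * w j)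
      = ∑ i ∈ S, ∑ j ∈ S.erase i, Q i j * (w i * w j) := by
  rw [← Finset.sum_subset (Finset.subset_univ S) (fun i _ hi => by
    simp [hw i hi])]
  refine Finset.sum_congr rfl (fun i hi => ?_)
  rw [← Finset.sum_subset (Finset.subset_univ S) (fun j _ hj => by
    simp [hw j hj])]
  rw [← Finset.add_sum_erase S _ hi, hd i]
  simp

lemma erase_double_sum (hS : S.card = m) :
    ∑ i ∈ S, ∑ j ∈ S.erase i, (|w i| * |w j|)
      = (∑ i ∈ S, |w i|) ^ 2 - ∑ i ∈ S, w i ^ 2 := by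
  have : ∀ i ∈ S, ∑ j ∈ S.erase i, (|w i| * |w j|)
      = |w i| * ((∑ j ∈ S, |w j|) - |w i|) := by
    intro i hi
    rw [← Finset.mul_sum, Finset.sum_erase_eq_sub hi]
  rw [Finset.sum_congr rfl this]
  have h2 : ∀ i ∈ S, |w i| * ((∑ j ∈ S, |w j|) - |w i|)
      = |w i| * (∑ j ∈ S, |w j|) - w i ^ 2 := by
    intro i _
    rw [mul_sub, ← abs_mul, ← sq, abs_sq]
  rw [Finset.sum_congr rfl h2, Finset.sum_sub_distrib, ← Finset.sum_mul, sq]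

lemma qform_term_le (ho : ∀ i j, i ≠ j → Q i j = 1 ∨ Q i j = -1) {i j : Fin n}
    (hij : i ≠ j) : Q i j * (w i * w j) ≤ |w i| * |w j| := by
  rcases ho i j hij with h | h <;> rw [h]
  · rw [one_mul, ← abs_mul]
    exact le_abs_self _
  · rw [neg_one_mul, ← abs_mul]
    exact neg_le_of_neg_le (by simpa using neg_abs_le (w i * w j))

lemma qform_le (hS : S.card = m) (ho : ∀ i j, i ≠ j → Q i j = 1 ∨ Q i j = -1) :
    ∑ i ∈ S, ∑ j ∈ S.erase i, Q i j * (w i * w j)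
      ≤ ((m : ℝ) - 1) * ∑ i ∈ S, w i ^ 2 := by
  have h1 : ∑ i ∈ S, ∑ j ∈ S.erase i, Q i j * (w i * w j)
      ≤ ∑ i ∈ S, ∑ j ∈ S.erase i, (|w i| * |w j|) := by
    refine Finset.sum_le_sum (fun i _ => Finset.sum_le_sum (fun j hj => ?_))
    exact qform_term_le ho (Finset.ne_of_mem_erase hj).symm
  have h2 := erase_double_sum (w := w) hS
  have h3 : (∑ i ∈ S, |w i|) ^ 2 ≤ (m : ℝ) * ∑ i ∈ S, w i ^ 2 := by
    have := sq_sum_le_card_mul_sum_sq (s := S) (f := fun i => |w i|)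
    simp only [sq_abs] at this
    rwa [hS] at this
  calc ∑ i ∈ S, ∑ j ∈ S.erase i, Q i j * (w i * w j)
      ≤ (∑ i ∈ S, |w i|) ^ 2 - ∑ i ∈ S, w i ^ 2 := by rw [← h2]; exact h1
    _ ≤ (m : ℝ) * ∑ i ∈ S, w i ^ 2 - ∑ i ∈ S, w i ^ 2 := by linarith
    _ = ((m : ℝ) - 1) * ∑ i ∈ S, w i ^ 2 := by ring

lemma qform_ge (hS : S.card = m) (ho : ∀ i j, i ≠ j → Q i j = 1 ∨ Q i j = -1) :
    -(((m : ℝ) - 1) * ∑ i ∈ S, w i ^ 2)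
      ≤ ∑ i ∈ S, ∑ j ∈ S.erase i, Q i j * (w i * w j) := by
  have ho' : ∀ i j, i ≠ j → (-Q) i j = 1 ∨ (-Q) i j = -1 := by
    intro i j hij
    rcases ho i j hij with h | h <;> simp [h]
  have := qform_le (w := w) hS ho'
  simp only [Matrix.neg_apply, neg_mul, Finset.sum_neg_distrib] at this
  linarith

lemma qform_eq_analysis (hS : S.card = m) (ho : ∀ i j, i ≠ j → Q i j = 1 ∨ Q i j = -1)
    (hw : ∀ i ∉ S, w i = 0) (hwne : w ≠ 0)
    (heq : ∑ i ∈ S, ∑ j ∈ S.erase i, Q i j * (w i * w j)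
      = ((m : ℝ) - 1) * ∑ i ∈ S, w i ^ 2) :
    (∀ i ∈ S, w i ≠ 0) ∧
      (∀ i ∈ S, ∀ j ∈ S, i ≠ j → Q i j * (w i * w j) = |w i| * |w j|) := by
  set s := ∑ i ∈ S, w i ^ 2 with hsdef
  set t := ∑ i ∈ S, |w i| with htdef
  have hs0 : 0 < s := by
    obtain ⟨i0, hi0⟩ := Function.ne_iff.mp hwne
    have hi0S : i0 ∈ S := by
      by_contra h
      exact hi0 (hw i0 h)
    have h1 : w i0 ^ 2 ≤ s := by
      refine Finset.single_le_sum (fun i _ => sq_nonneg (w i)) hi0S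
    have hne' : w i0 ≠ 0 := by simpa using hi0
    have h2 : 0 < w i0 ^ 2 := by positivity
    linarith
  have hterm : ∀ i ∈ S, ∀ j ∈ S.erase i, Q i j * (w i * w j) ≤ |w i| * |w j| :=
    fun i _ j hj => qform_term_le ho (Finset.ne_of_mem_erase hj).symm
  have hQleR : ∑ i ∈ S, ∑ j ∈ S.erase i, Q i j * (w i * w j)
      ≤ ∑ i ∈ S, ∑ j ∈ S.erase i, (|w i| * |w j|) :=
    Finset.sum_le_sum (fun i hi => Finset.sum_le_sum (fun j hj => hterm i hi j hj))
  have hR : ∑ i ∈ S, ∑ j ∈ S.erase i, (|w i| * |w j|) = t ^ 2 - s := erase_double_sum hS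
  have hCS : t ^ 2 ≤ (m : ℝ) * s := by
    have := sq_sum_le_card_mul_sum_sq (s := S) (f := fun i => |w i|)
    simp only [sq_abs] at this
    rwa [hS] at this
  -- equalities
  have hms : (m : ℝ) * s ≤ t ^ 2 := by
    rw [heq, hR] at hQleR
    linarith
  have ht2 : t ^ 2 = (m : ℝ) * s := le_antisymm hCS hms
  have hQR : ∑ i ∈ S, ∑ j ∈ S.erase i, Q i j * (w i * w j)
      = ∑ i ∈ S, ∑ j ∈ S.erase i, (|w i| * |w j|) := by
    rw [heq, hR, ht2]
    ring
  constructor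
  · intro i0 hi0
    by_contra h0
    have hm1 : 1 ≤ m := by
      rw [← hS]
      exact Finset.card_pos.mpr ⟨i0, hi0⟩
    have hte : t = ∑ i ∈ S.erase i0, |w i| := by
      rw [Finset.sum_erase_eq_sub hi0, htdef, h0]
      simp
    have hse : s = ∑ i ∈ S.erase i0, w i ^ 2 := by
      rw [Finset.sum_erase_eq_sub hi0, hsdef, h0]
      simp
    have hcs2 : t ^ 2 ≤ ((m : ℝ) - 1) * s := by
      have := sq_sum_le_card_mul_sum_sq (s := S.erase i0) (f := fun i => |w i|)
      simp only [sq_abs] at this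
      rw [Finset.card_erase_of_mem hi0, hS] at this
      rw [hte, hse]
      have hcast : ((m - 1 : ℕ) : ℝ) = (m : ℝ) - 1 := by
        rw [Nat.cast_sub hm1]
        simp
      rwa [hcast] at this
    rw [ht2] at hcs2
    nlinarith
  · intro i hi j hj hij
    have hjmem : j ∈ S.erase i := Finset.mem_erase.mpr ⟨hij.symm, hj⟩
    -- each term attains equality
    have hzero : ∑ i ∈ S, ∑ j ∈ S.erase i, ((|w i| * |w j|) - Q i j * (w i * w j)) = 0 := by
      rw [Finset.sum_congr rfl (fun i _ => Finset.sum_sub_distrib _ _), Finset.sum_sub_distrib, hQR]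
      ring
    have hnn : ∀ i ∈ S, 0 ≤ ∑ j ∈ S.erase i, ((|w i| * |w j|) - Q i j * (w i * w j)) :=
      fun i hi => Finset.sum_nonneg (fun j hj => by linarith [hterm i hi j hj])
    have h1 := (Finset.sum_eq_zero_iff_of_nonneg hnn).mp hzero i hi
    have hnn2 : ∀ j ∈ S.erase i, 0 ≤ (|w i| * |w j|) - Q i j * (w i * w j) :=
      fun j hj => by linarith [hterm i hi j hj]
    have h2 := (Finset.sum_eq_zero_iff_of_nonneg hnn2).mp h1 j hjmem
    linarith

end Comb

-- MATRIXPART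
section MatrixPart

variable {n k : ℕ}

lemma diagS_mulVec (S : Finset (Fin n)) (u : Fin n → ℝ) :
    (diagS S).mulVec u = fun i => if i ∈ S then u i else 0 := by
  ext i
  simp [diagS, Matrix.mulVec_diagonal, ite_mul, Matrix.mulVec, Matrix.diagonal,
    dotProduct, Finset.sum_ite_eq]

lemma diagS_transpose (S : Finset (Fin n)) : (diagS S)ᵀ = diagS S := by
  simp [diagS, Matrix.diagonal_transpose]

lemma errM_transpose (V : Matrix (Fin n) (Fin k) ℝ) (S : Finset (Fin n)) :
    (Vᵀ * diagS S * V)ᵀ = Vᵀ * diagS S * V := by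
  rw [Matrix.transpose_mul, Matrix.transpose_mul, Matrix.transpose_transpose,
    diagS_transpose, Matrix.mul_assoc]

lemma gram_dot (F : TwoUniformFrame n k) (w : Fin n → ℝ) :
    w ⬝ᵥ ((F.V * F.Vᵀ) *ᵥ w)
      = (k : ℝ)/n * (∑ i, w i ^ 2) + c n k * (∑ i, ∑ j, F.Q i j * (w i * w j)) := by
  rw [F.gram, Matrix.add_mulVec, dotProduct_add, Matrix.smul_mulVec,
    Matrix.smul_mulVec, Matrix.one_mulVec, dotProduct_smul,
    dotProduct_smul]
  congr 1
  · rw [smul_eq_mul]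
    congr 1
    simp [dotProduct, sq]
  · rw [smul_eq_mul]
    congr 1
    rw [dotProduct]
    rw [Finset.sum_congr rfl (fun i _ => by rw [Matrix.mulVec, dotProduct, Finset.mul_sum])]
    refine Finset.sum_congr rfl (fun i _ => Finset.sum_congr rfl (fun j _ => by ring))

lemma c_pos (hk : 1 ≤ k) (hkn : k < n) : 0 < c n k := by
  have hn2 : 2 ≤ n := lt_of_le_of_lt hk hkn
  have h1 : (0:ℝ) < (k : ℝ) := by exact_mod_cast hk
  have h2 : (k:ℝ) < (n:ℝ) := by exact_mod_cast hkn
  have h3 : (1:ℝ) < (n:ℝ) := by exact_mod_cast hn2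
  apply Real.sqrt_pos.mpr
  apply div_pos
  · nlinarith
  · have h4 : (0:ℝ) < (n:ℝ) := by linarith
    have h5 : (0:ℝ) < (n:ℝ)^2 := by positivity
    have h6 : (0:ℝ) < (n:ℝ) - 1 := by linarith
    exact mul_pos h5 h6

lemma kn_pos (hk : 1 ≤ k) (hkn : k < n) : 0 < (k:ℝ)/n := by
  have h1 : (0:ℝ) < (k : ℝ) := by exact_mod_cast hk
  have h2 : (0:ℝ) < (n:ℝ) := by
    have : 1 ≤ n := by omega
    exact_mod_cast Nat.lt_of_lt_of_le Nat.zero_lt_one this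
  exact div_pos h1 h2

lemma sum_sq_support {S : Finset (Fin n)} {w : Fin n → ℝ} (hw : ∀ i ∉ S, w i = 0) :
    ∑ i ∈ S, w i ^ 2 = ∑ i, w i ^ 2 :=
  Finset.sum_subset (Finset.subset_univ S) (fun i _ hi => by rw [hw i hi]; ring)

lemma sum_sq_pos {w : Fin n → ℝ} (hwne : w ≠ 0) : 0 < ∑ i, w i ^ 2 := by
  obtain ⟨i0, hi0⟩ := Function.ne_iff.mp hwne
  have hne' : w i0 ≠ 0 := by simpa using hi0
  have h1 : w i0 ^ 2 ≤ ∑ i, w i ^ 2 :=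
    Finset.single_le_sum (fun i _ => sq_nonneg (w i)) (Finset.mem_univ i0)
  have h2 : 0 < w i0 ^ 2 := by positivity
  linarith

lemma eig_identity (F : TwoUniformFrame n k) (S : Finset (Fin n))
    {μ : ℝ} {x : Fin k → ℝ} (hx : x ≠ 0)
    (heig : (F.Vᵀ * diagS S * F.V).mulVec x = μ • x) :
    μ = 0 ∨ ∃ w : Fin n → ℝ, w ≠ 0 ∧ (∀ i ∉ S, w i = 0) ∧
      μ * (∑ i, w i ^ 2) = (k : ℝ)/n * (∑ i, w i ^ 2)
        + c n k * (∑ i ∈ S, ∑ j ∈ S.erase i, F.Q i j * (w i * w j)) := by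
  set u := F.V *ᵥ x with hudef
  set w : Fin n → ℝ := fun i => if i ∈ S then u i else 0 with hwdef
  have hwD : w = diagS S *ᵥ u := by rw [diagS_mulVec]
  have hVtw : F.Vᵀ *ᵥ w = μ • x := by
    rw [hwD, hudef, Matrix.mulVec_mulVec, Matrix.mulVec_mulVec]
    exact heig
  by_cases hw0 : w = 0
  · left
    rw [hw0] at hVtw
    simp only [Matrix.mulVec_zero] at hVtw
    rcases smul_eq_zero.mp hVtw.symm with h | h
    · exact h
    · exact absurd h hx
  right
  refine ⟨w, hw0, fun i hi => by simp [hwdef, hi], ?_⟩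
  have hPw : (F.V * F.Vᵀ) *ᵥ w = μ • u := by
    rw [← Matrix.mulVec_mulVec, hVtw, Matrix.mulVec_smul]
  have hwu : w ⬝ᵥ u = ∑ i, w i ^ 2 := by
    refine Finset.sum_congr rfl (fun i _ => ?_)
    by_cases hi : i ∈ S
    · simp [hwdef, hi, sq]
    · simp [hwdef, hi]
  have hdot : w ⬝ᵥ ((F.V * F.Vᵀ) *ᵥ w) = μ * ∑ i, w i ^ 2 := by
    rw [hPw, dotProduct_smul, smul_eq_mul, hwu]
  have hsupp' : ∀ i ∉ S, w i = 0 := fun i hi => by simp [hwdef, hi]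
  rw [gram_dot, qform_restrict (S := S) F.diag hsupp'] at hdot
  rw [← hdot]

lemma bound_nonneg {m : ℕ} (hk : 1 ≤ k) (hkn : k < n) (hm : 1 ≤ m) :
    0 ≤ (k : ℝ)/n + ((m:ℝ)-1) * c n k := by
  have h1 := kn_pos hk hkn
  have h2 := c_pos hk hkn
  have h3 : (1:ℝ) ≤ (m:ℝ) := by exact_mod_cast hm
  nlinarith

lemma opNorm_errM_le {m : ℕ} (hk : 1 ≤ k) (hkn : k < n) (hm : 1 ≤ m)
    (F : TwoUniformFrame n k) (S : Finset (Fin n)) (hS : S.card = m) :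
    opNorm (F.Vᵀ * diagS S * F.V) ≤ (k : ℝ)/n + ((m:ℝ)-1) * c n k := by
  obtain ⟨μ, x, hμ, hx, heig⟩ :=
    exists_eigvec_opNorm (lt_of_lt_of_le zero_lt_one hk) (errM_transpose F.V S)
  rw [← hμ]
  rcases eig_identity F S hx heig with h0 | ⟨w, hwne, hsupp, hident⟩
  · rw [h0, abs_zero]
    exact bound_nonneg hk hkn hm
  · set s := ∑ i, w i ^ 2 with hsdef
    have hs0 : 0 < s := sum_sq_pos hwne
    have hsum : ∑ i ∈ S, w i ^ 2 = s := sum_sq_support hsupp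
    have hle := qform_le (w := w) hS F.offdiag
    have hge := qform_ge (w := w) hS F.offdiag
    rw [hsum] at hle hge
    have hc := (c_pos hk hkn).le
    have hknp := kn_pos hk hkn
    have habs : |μ| * s ≤ ((k : ℝ)/n + ((m:ℝ)-1) * c n k) * s := by
      have h1 : |μ * s| = |μ| * s := by
        rw [abs_mul, abs_of_pos hs0]
      rw [← h1, hident]
      have h2 : |c n k * (∑ i ∈ S, ∑ j ∈ S.erase i, F.Q i j * (w i * w j))|
          ≤ c n k * (((m:ℝ)-1) * s) := by
        rw [abs_mul, abs_of_nonneg hc]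
        refine mul_le_mul_of_nonneg_left ?_ hc
        rw [abs_le]
        constructor <;> linarith
      calc |(k : ℝ)/n * s + c n k * _| ≤ |(k : ℝ)/n * s| + |c n k * _| := abs_add_le _ _
        _ ≤ (k : ℝ)/n * s + c n k * (((m:ℝ)-1) * s) := by
            rw [abs_of_pos (mul_pos hknp hs0)]
            linarith
        _ = ((k : ℝ)/n + ((m:ℝ)-1) * c n k) * s := by ring
    exact le_of_mul_le_mul_right habs hs0

lemma triple_mulVec {k' : ℕ} (A : Matrix (Fin k') (Fin n) ℝ) (B : Matrix (Fin n) (Fin n) ℝ)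
    (C : Matrix (Fin n) (Fin k') ℝ) (x : Fin k' → ℝ) :
    (A * B * C) *ᵥ x = A *ᵥ (B *ᵥ (C *ᵥ x)) := by
  rw [Matrix.mulVec_mulVec, Matrix.mulVec_mulVec]

lemma induce_adj_iff (F : TwoUniformFrame n k) (S : Finset (Fin n))
    (v u : (S : Set (Fin n))) :
    ((frameGraph F).induce (S : Set (Fin n))).Adj v u
      ↔ ((v : Fin n) ≠ (u : Fin n) ∧ F.Q ↑v ↑u = -1) :=
  Iff.rfl

lemma opNorm_errM_eq_of_bipartite {m : ℕ} (hk : 1 ≤ k) (hkn : k < n) (hm : 1 ≤ m)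
    (F : TwoUniformFrame n k) (S : Finset (Fin n)) (hS : S.card = m)
    (hbip : IsCompleteBipartite ((frameGraph F).induce (S : Set (Fin n)))) :
    opNorm (F.Vᵀ * diagS S * F.V) = (k : ℝ)/n + ((m:ℝ)-1) * c n k := by
  obtain ⟨A, hA⟩ := hbip
  set b := (k : ℝ)/n + ((m:ℝ)-1) * c n k with hbdef
  have hc := c_pos hk hkn
  have hknp := kn_pos hk hkn
  have hm1 : (1:ℝ) ≤ (m:ℝ) := by exact_mod_cast hm
  have hb0 : 0 < b := by
    have : 0 ≤ ((m:ℝ)-1) * c n k := mul_nonneg (by linarith) hc.le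
    rw [hbdef]; linarith
  set ε : Fin n → ℝ := fun i =>
    if h : i ∈ S then (if (⟨i, Finset.mem_coe.mpr h⟩ : (S : Set (Fin n))) ∈ A then -1 else 1)
    else 1 with hεdef
  have hεsq : ∀ i, ε i * ε i = 1 := by
    intro i
    rw [hεdef]
    by_cases h : i ∈ S
    · by_cases h2 : (⟨i, Finset.mem_coe.mpr h⟩ : (S : Set (Fin n))) ∈ A <;> simp [h, h2]
    · simp [h]
  have hQε : ∀ i ∈ S, ∀ j ∈ S, i ≠ j → F.Q i j = ε i * ε j := by
    intro i hi j hj hij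
    have hadj := hA ⟨i, Finset.mem_coe.mpr hi⟩ ⟨j, Finset.mem_coe.mpr hj⟩
    rw [induce_adj_iff] at hadj
    simp only [Set.mem_setOf_eq] at hadj
    by_cases hiA : (⟨i, Finset.mem_coe.mpr hi⟩ : (S : Set (Fin n))) ∈ A <;>
      by_cases hjA : (⟨j, Finset.mem_coe.mpr hj⟩ : (S : Set (Fin n))) ∈ A
    · have hQ1 : F.Q i j = 1 := by
        rcases F.offdiag i j hij with h | h
        · exact h
        · exact absurd (hadj.mp ⟨hij, h⟩) (by simp [hiA, hjA])
      rw [hQ1]; simp [hεdef, hi, hj, hiA, hjA]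
    · have hQ1 : F.Q i j = -1 := (hadj.mpr (by simp [hiA, hjA])).2
      rw [hQ1]; simp [hεdef, hi, hj, hiA, hjA]
    · have hQ1 : F.Q i j = -1 := (hadj.mpr (by simp [hiA, hjA])).2
      rw [hQ1]; simp [hεdef, hi, hj, hiA, hjA]
    · have hQ1 : F.Q i j = 1 := by
        rcases F.offdiag i j hij with h | h
        · exact h
        · exact absurd (hadj.mp ⟨hij, h⟩) (by simp [hiA, hjA])
      rw [hQ1]; simp [hεdef, hi, hj, hiA, hjA]
  set w : Fin n → ℝ := fun i => if i ∈ S then ε i else 0 with hwdef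
  have hwsupp : ∀ i ∉ S, w i = 0 := fun i hi => by simp [hwdef, hi]
  have hSne : S.Nonempty := Finset.card_pos.mp (by omega)
  have hwne : w ≠ 0 := by
    obtain ⟨i0, hi0⟩ := hSne
    intro h
    have h2 := congrFun h i0
    rw [hwdef] at h2
    simp only [hi0, if_pos] at h2
    have := hεsq i0
    rw [h2] at this
    norm_num at this
  have hPapply : ∀ i j, (F.V * F.Vᵀ) i j
      = (k : ℝ)/n * (if i = j then 1 else 0) + c n k * F.Q i j := by
    intro i j
    rw [F.gram]
    simp [Matrix.one_apply]
  have hPwS : ∀ i ∈ S, ((F.V * F.Vᵀ) *ᵥ w) i = b * w i := by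
    intro i hi
    rw [Matrix.mulVec, dotProduct]
    rw [← Finset.sum_subset (Finset.subset_univ S) (fun j _ hj => by
      rw [hwsupp j hj]; ring)]
    have hterm : ∀ j ∈ S, (F.V * F.Vᵀ) i j * w j
        = (if i = j then (k : ℝ)/n * ε j else 0) + c n k * (F.Q i j * ε j) := by
      intro j hj
      rw [hPapply i j, hwdef]
      simp only [hj, if_pos]
      by_cases h : i = j <;> simp [h] <;> ring
    rw [Finset.sum_congr rfl hterm, Finset.sum_add_distrib, Finset.sum_ite_eq S i, ← Finset.mul_sum]
    have hQsum : ∑ j ∈ S, F.Q i j * ε j = ((m:ℝ)-1) * ε i := by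
      rw [← Finset.add_sum_erase S _ hi, F.diag i, zero_mul, zero_add]
      have : ∀ j ∈ S.erase i, F.Q i j * ε j = ε i := by
        intro j hj
        rw [hQε i hi j (Finset.mem_of_mem_erase hj) (Finset.ne_of_mem_erase hj).symm]
        rw [mul_assoc, hεsq j, mul_one]
      rw [Finset.sum_congr rfl this, Finset.sum_const, Finset.card_erase_of_mem hi, hS]
      rw [nsmul_eq_mul]
      congr 1
      rw [Nat.cast_sub hm]
      simp
    rw [hQsum]
    simp only [hi, if_pos]
    rw [hwdef]
    simp only [hi, if_pos]
    ring
  set x : Fin k → ℝ := F.Vᵀ *ᵥ w with hxdef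
  have hDPw : diagS S *ᵥ ((F.V * F.Vᵀ) *ᵥ w) = b • w := by
    rw [diagS_mulVec]
    ext i
    by_cases hi : i ∈ S
    · simp only [hi, if_pos, Pi.smul_apply, smul_eq_mul]
      exact hPwS i hi
    · simp only [hi, if_neg, not_false_iff, Pi.smul_apply, smul_eq_mul, hwsupp i hi, mul_zero]
  have heig : (F.Vᵀ * diagS S * F.V) *ᵥ x = b • x := by
    have h1 : F.V *ᵥ x = (F.V * F.Vᵀ) *ᵥ w := by
      rw [hxdef, Matrix.mulVec_mulVec]
    rw [triple_mulVec, h1, hDPw, Matrix.mulVec_smul, hxdef]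
  have hxne : x ≠ 0 := by
    intro h
    have h1 : F.V *ᵥ x = (F.V * F.Vᵀ) *ᵥ w := by
      rw [hxdef, Matrix.mulVec_mulVec]
    rw [h, Matrix.mulVec_zero] at h1
    rw [← h1] at hDPw
    simp only [Matrix.mulVec_zero] at hDPw
    have : w = 0 := by
      have := hDPw.symm
      rwa [smul_eq_zero_iff_right (ne_of_gt hb0)] at this
    exact hwne this
  have hge := abs_eig_le_opNorm hxne heig
  rw [abs_of_pos hb0] at hge
  exact le_antisymm (opNorm_errM_le hk hkn hm F S hS) hge

lemma bipartite_of_opNorm_eq {m : ℕ} (hk : 1 ≤ k) (hkn : k < n) (hm : 1 ≤ m)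
    (F : TwoUniformFrame n k) (S : Finset (Fin n)) (hS : S.card = m)
    (hnorm : opNorm (F.Vᵀ * diagS S * F.V) = (k : ℝ)/n + ((m:ℝ)-1) * c n k) :
    IsCompleteBipartite ((frameGraph F).induce (S : Set (Fin n))) := by
  set b := (k : ℝ)/n + ((m:ℝ)-1) * c n k with hbdef
  have hc := c_pos hk hkn
  have hknp := kn_pos hk hkn
  have hm1 : (1:ℝ) ≤ (m:ℝ) := by exact_mod_cast hm
  have hb0 : 0 < b := by
    have : 0 ≤ ((m:ℝ)-1) * c n k := mul_nonneg (by linarith) hc.le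
    rw [hbdef]; linarith
  obtain ⟨μ, x, hμ, hx, heig⟩ :=
    exists_eigvec_opNorm (lt_of_lt_of_le zero_lt_one hk) (errM_transpose F.V S)
  rw [hnorm] at hμ
  rcases eig_identity F S hx heig with h0 | ⟨w, hwne, hsupp, hident⟩
  · rw [h0, abs_zero] at hμ
    exact absurd hμ.symm (ne_of_gt hb0)
  set s := ∑ i, w i ^ 2 with hsdef
  have hs0 : 0 < s := sum_sq_pos hwne
  have hsum : ∑ i ∈ S, w i ^ 2 = s := sum_sq_support hsupp
  set Qf := ∑ i ∈ S, ∑ j ∈ S.erase i, F.Q i j * (w i * w j) with hQfdef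
  have hle : Qf ≤ ((m:ℝ)-1) * s := by
    have := qform_le (w := w) hS F.offdiag
    rwa [hsum] at this
  have hge : -(((m:ℝ)-1) * s) ≤ Qf := by
    have := qform_ge (w := w) hS F.offdiag
    rwa [hsum] at this
  have hμb : μ = b := by
    rcases (abs_eq hb0.le).mp hμ with h | h
    · exact h
    · exfalso
      rw [h] at hident
      rw [hbdef] at hident
      nlinarith
  rw [hμb] at hident
  have hQf : Qf = ((m:ℝ)-1) * s := by
    have hcQf : c n k * Qf = c n k * (((m:ℝ)-1) * s) := by
      rw [hbdef] at hident
      nlinarith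
    exact mul_left_cancel₀ (ne_of_gt hc) hcQf
  rw [← hsum] at hQf
  obtain ⟨h1, h2⟩ := qform_eq_analysis hS F.offdiag hsupp hwne hQf
  refine ⟨{v : (S : Set (Fin n)) | 0 < w ↑v}, ?_⟩
  intro v u
  rw [induce_adj_iff]
  by_cases hvu : (v : Fin n) = (u : Fin n)
  · have hvequ : v = u := Subtype.ext hvu
    subst hvequ
    constructor
    · intro h
      exact absurd rfl h.1
    · intro h
      simp only [Set.mem_setOf_eq] at h
      exact absurd h iff_not_self
  · have hvS : (v : Fin n) ∈ S := Finset.mem_coe.mp v.2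
    have huS : (u : Fin n) ∈ S := Finset.mem_coe.mp u.2
    have hwv : w ↑v ≠ 0 := h1 _ hvS
    have hwu : w ↑u ≠ 0 := h1 _ huS
    have hprod := h2 _ hvS _ huS hvu
    have habs : |w ↑v| * |w ↑u| = |w ↑v * w ↑u| := (abs_mul _ _).symm
    have habs0 : 0 < |w ↑v * w ↑u| := abs_pos.mpr (mul_ne_zero hwv hwu)
    simp only [Set.mem_setOf_eq]
    rcases F.offdiag _ _ hvu with hq | hq
    · rw [hq, one_mul] at hprod
      have hpos : 0 < w ↑v * w ↑u := by
        rw [hprod, habs]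
        exact habs0
      rw [mul_pos_iff] at hpos
      refine iff_of_false (fun h => by rw [hq] at h; exact absurd h.2 (by norm_num)) ?_
      intro hiff
      rcases hpos with ⟨ha, hb⟩ | ⟨ha, hb⟩
      · exact (hiff.mp ha) hb
      · have := hiff.mpr (not_lt.mpr hb.le)
        linarith
    · rw [hq] at hprod
      have hneg : w ↑v * w ↑u < 0 := by
        have : -(w ↑v * w ↑u) = |w ↑v * w ↑u| := by
          rw [← habs, ← hprod]; ring
        nlinarith
      rw [mul_neg_iff] at hneg
      refine iff_of_true ⟨hvu, hq⟩ ?_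
      rcases hneg with ⟨ha, hb⟩ | ⟨ha, hb⟩
      · exact iff_of_true ha (not_lt.mpr hb.le)
      · exact iff_of_false (not_lt.mpr ha.le) (fun hcon => hcon hb)

end MatrixPart

theorem statement6 (n k m : ℕ) (hk : 1 ≤ k) (hkn : k < n) (hm : 1 ≤ m) (hmn : m ≤ n)
    (F : TwoUniformFrame n k) :
    errInf F.V m ≤ (k : ℝ) / n + ((m : ℝ) - 1) * c n k ∧
    (errInf F.V m = (k : ℝ) / n + ((m : ℝ) - 1) * c n k ↔
      HasInducedCompleteBipartite (frameGraph F) m) := by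
  classical
  set b := (k : ℝ)/n + ((m:ℝ)-1) * c n k with hbdef
  set ES : Set ℝ :=
    {x : ℝ | ∃ S : Finset (Fin n), S.card = m ∧ x = opNorm (F.Vᵀ * diagS S * F.V)} with hESdef
  have hEI : errInf F.V m = sSup ES := rfl
  have hfin : ES.Finite := by
    have hsub : ES ⊆ Set.range (fun S : Finset (Fin n) => opNorm (F.Vᵀ * diagS S * F.V)) := by
      rintro x ⟨S, _, rfl⟩
      exact ⟨S, rfl⟩
    exact (Set.finite_range _).subset hsub
  have hne : ES.Nonempty := by
    have hmn' : m ≤ (Finset.univ : Finset (Fin n)).card := by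
      rw [Finset.card_univ, Fintype.card_fin]; exact hmn
    obtain ⟨S, _, hcard⟩ := Finset.exists_subset_card_eq hmn'
    exact ⟨_, S, hcard, rfl⟩
  have hub : ∀ x ∈ ES, x ≤ b := by
    rintro x ⟨S, hcard, rfl⟩
    exact opNorm_errM_le hk hkn hm F S hcard
  have hle : errInf F.V m ≤ b := by
    rw [hEI]
    exact csSup_le hne hub
  refine ⟨hle, ?_, ?_⟩
  · intro heq
    have hmem : sSup ES ∈ ES := hne.csSup_mem hfin
    obtain ⟨S, hcard, hSeq⟩ := hmem
    rw [hEI] at heq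
    exact ⟨S, hcard, bipartite_of_opNorm_eq hk hkn hm F S hcard (by rw [← hSeq, heq])⟩
  · rintro ⟨S, hcard, hbip⟩
    have hval := opNorm_errM_eq_of_bipartite hk hkn hm F S hcard hbip
    have hmem : opNorm (F.Vᵀ * diagS S * F.V) ∈ ES := ⟨S, hcard, rfl⟩
    have hge : b ≤ errInf F.V m := by
      rw [hEI, hbdef, ← hval]
      exact le_csSup hfin.bddAbove hmem
    exact le_antisymm hle hge

end FramesErasures
end
end
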